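/- Let G be an acyclic grade graph. Then G* = I + G*·G and G* = I + G·G*, as pointwise equalities of grade matrices. -/

import Mathlib

open scoped Classical

/-- Weight of a path (nonempty list of vertices) in a grade graph. -/
def pathWeight {V R : Type*} [Semiring R] (G : V → V → R) : List V → R
  | [] => 1
  | [_] => 1
  | x :: y :: p => G x y * pathWeight G (y :: p)

/-- The set of non-source nodes of a grade graph. -/
def Nodes {V R : Type*} [Zero R] (G : V → V → R) : Set V := {y | ∃ x, G x y ≠ 0}

/-- Paths from `x` to `y`: nonempty lists with head `x` and last element `y`. -/
def PathsBtw {V : Type*} (x y : V) : Set (List V) :=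
  {p | p ≠ [] ∧ p.head? = some x ∧ p.getLast? = some y}

/-- A cycle: a path with more than one node and equal endpoints. -/
def IsCyclePath {V : Type*} (p : List V) : Prop := 1 < p.length ∧ p.head? = p.getLast?

/-- A grade graph is acyclic if every cycle has weight zero. -/
def Acyclic {V R : Type*} [Semiring R] (G : V → V → R) : Prop :=
  ∀ p : List V, IsCyclePath p → pathWeight G p = 0

/-- Reflexive and transitive closure of a grade graph:
`G*(x,y) = Σ_{p ∈ Paths(x,y)} w_G(p)`. -/
noncomputable def gstar {V R : Type*} [Semiring R] (G : V → V → R) (x y : V) : R :=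
  ∑ᶠ p ∈ PathsBtw x y, pathWeight G p

/-- Grade matrix multiplication. -/
noncomputable def matMul {V R : Type*} [Semiring R] (M₁ M₂ : V → V → R) (x y : V) : R :=
  ∑ᶠ z, M₁ x z * M₂ z y

/-- Identity grade matrix. -/
noncomputable def matId {V R : Type*} [Semiring R] (x y : V) : R := if x = y then 1 else 0

/-- `n`-fold product of a grade graph with itself, with `G⁰ = I`. -/
noncomputable def matPow {V R : Type*} [Semiring R] (G : V → V → R) : ℕ → V → V → R
  | 0 => matId
  | n + 1 => matMul G (matPow G n)

/-- Multiplication of a grade context by a grade matrix: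
`(γ·M)(x) = Σ_y γ(y)·M(y,x)`. -/
noncomputable def ctxMul {V R : Type*} [Semiring R] (γ : V → R) (M : V → V → R) (x : V) : R :=
  ∑ᶠ y, γ y * M y x

/-- A grade matrix: every row has finite support. -/
def RowFinite {V R : Type*} [Zero R] (M : V → V → R) : Prop :=
  ∀ x, {y | M x y ≠ 0}.Finite

section Helpers

variable {V R : Type*} [Semiring R]

theorem pathWeight_cons (G : V → V → R) (x : V) {q : List V} {z : V}
    (hz : q.head? = some z) : pathWeight G (x :: q) = G x z * pathWeight G q := by
  cases q with
  | nil => simp at hz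
  | cons a q' =>
    simp only [List.head?_cons, Option.some.injEq] at hz
    subst hz
    rfl

theorem pathWeight_concat (G : V → V → R) (y : V) :
    ∀ {q : List V} {z : V}, q ≠ [] → q.getLast? = some z →
      pathWeight G (q ++ [y]) = pathWeight G q * G z y := by
  intro q
  induction q with
  | nil => intro z h; exact absurd rfl h
  | cons b q ih =>
    intro z _ hz
    cases q with
    | nil =>
      simp only [List.getLast?_singleton, Option.some.injEq] at hz
      subst hz
      show G b y * pathWeight G [y] = pathWeight G [b] * G b y
      show G b y * 1 = 1 * G b y
      rw [one_mul, mul_one]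
    | cons c q' =>
      rw [List.getLast?_cons_cons] at hz
      have h1 : pathWeight G ((b :: c :: q') ++ [y]) =
          G b c * pathWeight G ((c :: q') ++ [y]) := rfl
      have h2 : pathWeight G (b :: c :: q') = G b c * pathWeight G (c :: q') := rfl
      rw [h1, ih (List.cons_ne_nil _ _) hz, h2, mul_assoc]

theorem pathWeight_append (G : V → V → R) :
    ∀ (u : List V) (a : V) (v : List V),
      pathWeight G (u ++ a :: v) = pathWeight G (u ++ [a]) * pathWeight G (a :: v) := by
  intro u
  induction u with
  | nil =>
    intro a v
    show pathWeight G (a :: v) = pathWeight G [a] * pathWeight G (a :: v)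
    show pathWeight G (a :: v) = 1 * pathWeight G (a :: v)
    rw [one_mul]
  | cons b u ih =>
    intro a v
    cases u with
    | nil =>
      show pathWeight G (b :: a :: v) = pathWeight G [b, a] * pathWeight G (a :: v)
      show G b a * pathWeight G (a :: v) = (G b a * 1) * pathWeight G (a :: v)
      rw [mul_one]
    | cons c u' =>
      have h1 : pathWeight G ((b :: c :: u') ++ a :: v) =
          G b c * pathWeight G ((c :: u') ++ a :: v) := rfl
      have h2 : pathWeight G ((b :: c :: u') ++ [a]) =
          G b c * pathWeight G ((c :: u') ++ [a]) := rfl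
      rw [h1, ih a v, h2, mul_assoc]

theorem sublist_pair {p : List V} {a : V} (h : List.Sublist [a, a] p) :
    ∃ l₁ l₂ l₃ : List V, p = l₁ ++ a :: l₂ ++ a :: l₃ := by
  induction p with
  | nil => simp at h
  | cons b p ih =>
    cases h with
    | cons _ h' =>
      obtain ⟨l₁, l₂, l₃, rfl⟩ := ih h'
      exact ⟨b :: l₁, l₂, l₃, rfl⟩
    | cons_cons _ h2 =>
      obtain ⟨s, t, rfl⟩ := List.append_of_mem (List.singleton_sublist.1 h2)
      exact ⟨[], s, t, rfl⟩

theorem pathWeight_eq_zero_of_not_nodup (G : V → V → R) (hacyc : Acyclic G)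
    {p : List V} (h : ¬ p.Nodup) : pathWeight G p = 0 := by
  rw [List.nodup_iff_sublist] at h
  push_neg at h
  obtain ⟨a, ha⟩ := h
  obtain ⟨l₁, l₂, l₃, rfl⟩ := sublist_pair ha
  have hc : pathWeight G ((a :: l₂) ++ [a]) = 0 := by
    apply hacyc
    constructor
    · simp only [List.length_append, List.length_cons, List.length_singleton]
      omega
    · rw [List.getLast?_concat]
      rfl
  calc pathWeight G (l₁ ++ a :: l₂ ++ a :: l₃)
      = pathWeight G (l₁ ++ a :: (l₂ ++ a :: l₃)) := by simp
    _ = pathWeight G (l₁ ++ [a]) * pathWeight G (a :: (l₂ ++ a :: l₃)) :=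
        pathWeight_append G l₁ a (l₂ ++ a :: l₃)
    _ = pathWeight G (l₁ ++ [a]) * pathWeight G ((a :: l₂) ++ a :: l₃) := by simp
    _ = pathWeight G (l₁ ++ [a]) *
          (pathWeight G ((a :: l₂) ++ [a]) * pathWeight G (a :: l₃)) := by
        rw [pathWeight_append G (a :: l₂) a l₃]
    _ = 0 := by rw [hc, zero_mul, mul_zero]

theorem chain'_of_pathWeight_ne_zero (G : V → V → R) :
    ∀ {p : List V}, pathWeight G p ≠ 0 → List.Chain' (fun u v => G u v ≠ 0) p := by
  intro p
  induction p with
  | nil => intro _; exact List.isChain_nil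
  | cons a p ih =>
    intro h
    cases p with
    | nil => exact List.isChain_singleton a
    | cons b l =>
      have hw : pathWeight G (a :: b :: l) = G a b * pathWeight G (b :: l) := rfl
      rw [hw] at h
      have h1 : G a b ≠ 0 := fun h0 => h (by rw [h0, zero_mul])
      have h2 : pathWeight G (b :: l) ≠ 0 := fun h0 => h (by rw [h0, mul_zero])
      exact List.isChain_cons_cons.2 ⟨h1, ih h2⟩

theorem mem_of_chain' (G : V → V → R) :
    ∀ (a : V) (l : List V), List.Chain' (fun u v => G u v ≠ 0) (a :: l) →
      ∀ v ∈ a :: l, v = a ∨ ∃ u, G u v ≠ 0 := by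
  intro a l
  induction l generalizing a with
  | nil =>
    intro _ v hv
    left
    simpa using hv
  | cons b l ih =>
    intro hc v hv
    unfold List.Chain' at hc
    rw [List.isChain_cons_cons] at hc
    rcases List.mem_cons.1 hv with rfl | hv'
    · left; rfl
    · rcases ih b hc.2 v hv' with rfl | hu
      · right; exact ⟨a, hc.1⟩
      · right; exact hu

theorem finite_nodup_lists {T : Set V} (hT : T.Finite) :
    {l : List V | l.Nodup ∧ ∀ v ∈ l, v ∈ T}.Finite := by
  have : Finite ↥T := hT
  have hfin : Fintype ↥T := hT.fintype
  apply Set.Finite.subset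
    ((List.finite_length_le ↥T (Fintype.card ↥T)).image (List.map Subtype.val))
  rintro l ⟨hnd, hmem⟩
  refine ⟨l.pmap (fun v h => (⟨v, h⟩ : ↥T)) hmem, ?_, ?_⟩
  · simp only [Set.mem_setOf_eq, List.length_pmap]
    have hnd' : (l.pmap (fun v h => (⟨v, h⟩ : ↥T)) hmem).Nodup :=
      hnd.pmap (fun a _ b _ h => congrArg Subtype.val h)
    simpa using hnd'.length_le_card
  · rw [List.map_pmap]
    simp

theorem pathsBtw_inter_support_finite (G : V → V → R)
    (hG : {q : V × V | G q.1 q.2 ≠ 0}.Finite) (hacyc : Acyclic G) (x z : V) :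
    (PathsBtw x z ∩ Function.support (fun p => pathWeight G p)).Finite := by
  have hT : (insert x (Prod.snd '' {q : V × V | G q.1 q.2 ≠ 0})).Finite :=
    (hG.image _).insert x
  apply (finite_nodup_lists hT).subset
  rintro p ⟨⟨hne, hhd, _⟩, hw⟩
  simp only [Function.mem_support] at hw
  constructor
  · by_contra h
    exact hw (pathWeight_eq_zero_of_not_nodup G hacyc h)
  · intro v hv
    obtain ⟨a, l, rfl⟩ : ∃ a l, p = a :: l := by
      cases p with
      | nil => exact absurd rfl hne
      | cons a l => exact ⟨a, l, rfl⟩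
    simp only [List.head?_cons, Option.some.injEq] at hhd
    rcases mem_of_chain' G a l (chain'_of_pathWeight_ne_zero G hw) v hv with rfl | ⟨u, hu⟩
    · rw [hhd]; exact Set.mem_insert _ _
    · exact Set.mem_insert_iff.2 (Or.inr ⟨(u, v), hu, rfl⟩)

end Helpers

/-- For an acyclic grade graph `G`, `G* = I + G*·G` and `G* = I + G·G*`,
as pointwise equalities of grade matrices. -/
theorem gstar_fixed_point_eq {V R : Type*} [Semiring R] [PartialOrder R]
    (hadd : ∀ a b c d : R, a ≤ b → c ≤ d → a + c ≤ b + d)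
    (hmul : ∀ a b c d : R, a ≤ b → c ≤ d → a * c ≤ b * d)
    (hzero : ∀ r : R, r ≤ 0 → r = 0)
    (G : V → V → R) (hG : {q : V × V | G q.1 q.2 ≠ 0}.Finite)
    (hacyc : Acyclic G) :
    ∀ x y : V,
      gstar G x y = matId x y + matMul (gstar G) G x y ∧
      gstar G x y = matId x y + matMul G (gstar G) x y := by
  intro x y
  classical
  have hPfin : ∀ a b : V,
      (PathsBtw a b ∩ Function.support (fun p => pathWeight G p)).Finite :=
    fun a b => pathsBtw_inter_support_finite G hG hacyc a b
  have hgs : ∀ a b : V, gstar G a b = ∑ p ∈ (hPfin a b).toFinset, pathWeight G p :=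
    fun a b => finsum_mem_eq_sum _ (hPfin a b)
  have hQmem : ∀ a b : V, ∀ p : List V,
      p ∈ (hPfin a b).toFinset ↔ (p ∈ PathsBtw a b ∧ pathWeight G p ≠ 0) := by
    intro a b p
    rw [Set.Finite.mem_toFinset]
    exact Iff.rfl
  set B : Set (List V) := {p | p ∈ PathsBtw x y ∧ 2 ≤ p.length} with hBdef
  have hBsub : B ⊆ PathsBtw x y := fun p hp => hp.1
  have hBfin : (B ∩ Function.support (fun p => pathWeight G p)).Finite :=
    (hPfin x y).subset (fun p hp => ⟨hp.1.1, hp.2⟩)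
  -- Step 1 : gstar = matId + sum over B
  have hstep1 : gstar G x y = matId x y + ∑ᶠ p ∈ B, pathWeight G p := by
    have hsplit : PathsBtw x y = (({[x]} : Set (List V)) ∩ PathsBtw x y) ∪ B := by
      ext p
      constructor
      · intro hp
        rcases p with _ | ⟨a, _ | ⟨b, l⟩⟩
        · exact absurd rfl hp.1
        · left
          have ha : a = x := by
            have := hp.2.1
            simpa using this
          exact ⟨by simp [ha], hp⟩
        · right
          exact ⟨hp, by simp⟩
      · rintro (hp | hp)
        · exact hp.2
        · exact hp.1
    have hdis : Disjoint (({[x]} : Set (List V)) ∩ PathsBtw x y) B := by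
      rw [Set.disjoint_left]
      rintro p ⟨hp1, _⟩ hp2
      rw [Set.mem_singleton_iff] at hp1
      subst hp1
      have := hp2.2
      simp at this
    have h1 : ((({[x]} : Set (List V)) ∩ PathsBtw x y) ∩
        Function.support (fun p => pathWeight G p)).Finite :=
      (Set.finite_singleton [x]).subset (fun p hp => hp.1.1)
    have : gstar G x y = ∑ᶠ p ∈ PathsBtw x y, pathWeight G p := rfl
    rw [this, hsplit, finsum_mem_union' hdis h1 hBfin]
    congr 1
    by_cases hxy : x = y
    · subst hxy
      have hx : ({[x]} : Set (List V)) ∩ PathsBtw x x = {[x]} := by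
        apply Set.inter_eq_left.2
        intro p hp
        rw [Set.mem_singleton_iff] at hp
        subst hp
        exact ⟨List.cons_ne_nil _ _, rfl, rfl⟩
      rw [hx, finsum_mem_singleton]
      simp [matId, pathWeight]
    · have hx : ({[x]} : Set (List V)) ∩ PathsBtw x y = ∅ := by
        ext p
        simp only [Set.mem_inter_iff, Set.mem_singleton_iff, Set.mem_empty_iff_false,
          iff_false, not_and]
        rintro rfl ⟨_, _, hlast⟩
        have : x = y := by simpa using hlast
        exact hxy this
      rw [hx, finsum_mem_empty]
      simp [matId, hxy]
  -- Step 2 : matMul (gstar G) G x y = sum over B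
  have hZfin : {z : V | G z y ≠ 0}.Finite :=
    (hG.image Prod.fst).subset (fun z hz => ⟨(z, y), hz, rfl⟩)
  have hstep2 : matMul (gstar G) G x y = ∑ᶠ p ∈ B, pathWeight G p := by
    set F : V → Finset (List V) :=
      fun z => ((hPfin x z).toFinset).image (· ++ [y]) with hFdef
    have e1 : matMul (gstar G) G x y = ∑ z ∈ hZfin.toFinset, gstar G x z * G z y := by
      have : matMul (gstar G) G x y = ∑ᶠ z, gstar G x z * G z y := rfl
      rw [this]
      apply finsum_eq_sum_of_support_subset
      intro z hz
      simp only [Function.mem_support] at hz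
      have hGz : G z y ≠ 0 := fun h0 => hz (by rw [h0, mul_zero])
      simpa using hGz
    have e2 : ∀ z ∈ hZfin.toFinset, gstar G x z * G z y = ∑ p ∈ F z, pathWeight G p := by
      intro z _
      rw [hgs x z, Finset.sum_mul, hFdef]
      have hinj : ∀ q1 ∈ (hPfin x z).toFinset, ∀ q2 ∈ (hPfin x z).toFinset,
          q1 ++ [y] = q2 ++ [y] → q1 = q2 :=
        fun q1 _ q2 _ h => (List.append_left_inj _).1 h
      rw [Finset.sum_image hinj]
      apply Finset.sum_congr rfl
      intro q hq
      rw [hQmem] at hq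
      obtain ⟨⟨hne, _, hlast⟩, _⟩ := hq
      exact (pathWeight_concat G y hne hlast).symm
    have hdisj : Set.PairwiseDisjoint (↑hZfin.toFinset) F := by
      intro z1 h1 z2 h2 hne
      rw [Function.onFun, Finset.disjoint_left]
      intro p hp1 hp2
      simp only [hFdef, Finset.mem_image] at hp1 hp2
      obtain ⟨q1, hq1, rfl⟩ := hp1
      obtain ⟨q2, hq2, he⟩ := hp2
      obtain rfl : q1 = q2 := ((List.append_left_inj _).1 he.symm)
      rw [hQmem] at hq1 hq2
      have hl1 : q1.getLast? = some z1 := hq1.1.2.2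
      have hl2 : q1.getLast? = some z2 := hq2.1.2.2
      rw [hl1] at hl2
      exact hne (Option.some.inj hl2)
    have e3 : ∑ z ∈ hZfin.toFinset, ∑ p ∈ F z, pathWeight G p
        = ∑ p ∈ hZfin.toFinset.biUnion F, pathWeight G p :=
      (Finset.sum_biUnion hdisj).symm
    have e4 : ∑ᶠ p ∈ B, pathWeight G p
        = ∑ p ∈ hZfin.toFinset.biUnion F, pathWeight G p := by
      apply finsum_mem_eq_sum_of_inter_support_eq
      ext p
      simp only [Set.mem_inter_iff, Function.mem_support, Finset.coe_biUnion,
        Set.mem_iUnion, Finset.mem_coe, Set.Finite.mem_toFinset, Set.mem_setOf_eq]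
      constructor
      · rintro ⟨⟨⟨hne, hhd, hlast⟩, hlen⟩, hw0⟩
        refine ⟨?_, hw0⟩
        have hy : p.getLast hne = y := by
          have h := List.getLast?_eq_getLast hne
          rw [hlast] at h
          exact (Option.some.inj h).symm
        have hq' : p = p.dropLast ++ [y] := by
          conv_lhs => rw [← List.dropLast_append_getLast hne]
          rw [hy]
        have hqne : p.dropLast ≠ [] := by
          intro h0
          rw [hq', h0] at hlen
          simp at hlen
        have hql : p.dropLast.getLast? = some (p.dropLast.getLast hqne) :=
          List.getLast?_eq_getLast hqne
        have hqhd : p.dropLast.head? = some x := by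
          rw [hq'] at hhd
          cases hq2 : p.dropLast with
          | nil => exact absurd hq2 hqne
          | cons a q' =>
            rw [hq2] at hhd
            simpa using hhd
        have hwp : pathWeight G p
            = pathWeight G p.dropLast * G (p.dropLast.getLast hqne) y := by
          conv_lhs => rw [hq']
          exact pathWeight_concat G y hqne hql
        have hGzy : G (p.dropLast.getLast hqne) y ≠ 0 :=
          fun h0 => hw0 (by rw [hwp, h0, mul_zero])
        have hwq : pathWeight G p.dropLast ≠ 0 :=
          fun h0 => hw0 (by rw [hwp, h0, zero_mul])
        refine ⟨p.dropLast.getLast hqne, hGzy, ?_⟩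
        simp only [hFdef, Finset.mem_image]
        refine ⟨p.dropLast, ?_, hq'.symm⟩
        rw [hQmem]
        exact ⟨⟨hqne, hqhd, hql⟩, hwq⟩
      · rintro ⟨⟨z, hzZ, hpF⟩, hw0⟩
        refine ⟨⟨?_, ?_⟩, hw0⟩
        swap
        · simp only [hFdef, Finset.mem_image] at hpF
          obtain ⟨q, hq, rfl⟩ := hpF
          rw [hQmem] at hq
          have hqne := hq.1.1
          rw [List.length_append]
          have : 1 ≤ q.length := List.length_pos_iff.2 hqne
          simp only [List.length_singleton]
          omega
        · simp only [hFdef, Finset.mem_image] at hpF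
          obtain ⟨q, hq, rfl⟩ := hpF
          rw [hQmem] at hq
          obtain ⟨⟨hqne, hqhd, _⟩, _⟩ := hq
          refine ⟨by simp [hqne], ?_, (List.getLast?_concat (l := q))⟩
          cases q with
          | nil => exact absurd rfl hqne
          | cons a q' => simpa using hqhd
    rw [e1, Finset.sum_congr rfl e2, e3, e4]
  -- Step 3 : matMul G (gstar G) x y = sum over B
  have hZfin' : {z : V | G x z ≠ 0}.Finite :=
    (hG.image Prod.snd).subset (fun z hz => ⟨(x, z), hz, rfl⟩)
  have hstep3 : matMul G (gstar G) x y = ∑ᶠ p ∈ B, pathWeight G p := by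
    set F : V → Finset (List V) :=
      fun z => ((hPfin z y).toFinset).image (x :: ·) with hFdef
    have e1 : matMul G (gstar G) x y = ∑ z ∈ hZfin'.toFinset, G x z * gstar G z y := by
      have : matMul G (gstar G) x y = ∑ᶠ z, G x z * gstar G z y := rfl
      rw [this]
      apply finsum_eq_sum_of_support_subset
      intro z hz
      simp only [Function.mem_support] at hz
      have hGz : G x z ≠ 0 := fun h0 => hz (by rw [h0, zero_mul])
      simpa using hGz
    have e2 : ∀ z ∈ hZfin'.toFinset, G x z * gstar G z y = ∑ p ∈ F z, pathWeight G p := by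
      intro z _
      rw [hgs z y, Finset.mul_sum, hFdef]
      have hinj : ∀ q1 ∈ (hPfin z y).toFinset, ∀ q2 ∈ (hPfin z y).toFinset,
          x :: q1 = x :: q2 → q1 = q2 :=
        fun q1 _ q2 _ h => List.tail_eq_of_cons_eq h
      rw [Finset.sum_image hinj]
      apply Finset.sum_congr rfl
      intro q hq
      rw [hQmem] at hq
      obtain ⟨⟨_, hhd, _⟩, _⟩ := hq
      exact (pathWeight_cons G x hhd).symm
    have hdisj : Set.PairwiseDisjoint (↑hZfin'.toFinset) F := by
      intro z1 h1 z2 h2 hne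
      rw [Function.onFun, Finset.disjoint_left]
      intro p hp1 hp2
      simp only [hFdef, Finset.mem_image] at hp1 hp2
      obtain ⟨q1, hq1, rfl⟩ := hp1
      obtain ⟨q2, hq2, he⟩ := hp2
      obtain rfl : q1 = q2 := List.tail_eq_of_cons_eq he.symm
      rw [hQmem] at hq1 hq2
      have hl1 : q1.head? = some z1 := hq1.1.2.1
      have hl2 : q1.head? = some z2 := hq2.1.2.1
      rw [hl1] at hl2
      exact hne (Option.some.inj hl2)
    have e3 : ∑ z ∈ hZfin'.toFinset, ∑ p ∈ F z, pathWeight G p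
        = ∑ p ∈ hZfin'.toFinset.biUnion F, pathWeight G p :=
      (Finset.sum_biUnion hdisj).symm
    have e4 : ∑ᶠ p ∈ B, pathWeight G p
        = ∑ p ∈ hZfin'.toFinset.biUnion F, pathWeight G p := by
      apply finsum_mem_eq_sum_of_inter_support_eq
      ext p
      simp only [Set.mem_inter_iff, Function.mem_support, Finset.coe_biUnion,
        Set.mem_iUnion, Finset.mem_coe, Set.Finite.mem_toFinset, Set.mem_setOf_eq]
      constructor
      · rintro ⟨⟨⟨hne, hhd, hlast⟩, hlen⟩, hw0⟩
        refine ⟨?_, hw0⟩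
        rcases p with _ | ⟨a, _ | ⟨b, l⟩⟩
        · exact absurd rfl hne
        · simp at hlen
        · have ha : a = x := by simpa using hhd
          subst ha
          have hql : (b :: l).getLast? = some y := by
            rw [← List.getLast?_cons_cons]
            exact hlast
          have hwp : pathWeight G (a :: b :: l) = G a b * pathWeight G (b :: l) := rfl
          have hGxb : G a b ≠ 0 := fun h0 => hw0 (by rw [hwp, h0, zero_mul])
          have hwq : pathWeight G (b :: l) ≠ 0 := fun h0 => hw0 (by rw [hwp, h0, mul_zero])
          refine ⟨b, hGxb, ?_⟩
          simp only [hFdef, Finset.mem_image]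
          refine ⟨b :: l, ?_, rfl⟩
          rw [hQmem]
          exact ⟨⟨List.cons_ne_nil _ _, rfl, hql⟩, hwq⟩
      · rintro ⟨⟨z, hzZ, hpF⟩, hw0⟩
        simp only [hFdef, Finset.mem_image] at hpF
        obtain ⟨q, hq, rfl⟩ := hpF
        rw [hQmem] at hq
        obtain ⟨⟨hqne, _, hqlast⟩, _⟩ := hq
        refine ⟨⟨⟨List.cons_ne_nil _ _, rfl, ?_⟩, ?_⟩, hw0⟩
        · cases q with
          | nil => exact absurd rfl hqne
          | cons c q' =>
            rw [List.getLast?_cons_cons]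
            exact hqlast
        · have : 1 ≤ q.length := List.length_pos_iff.2 hqne
          simp only [List.length_cons]
          omega
    rw [e1, Finset.sum_congr rfl e2, e3, e4]
  exact ⟨by rw [hstep1, hstep2], by rw [hstep1, hstep3]⟩
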